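/- Fix integers n, p ≥ 1. There exists a universal constant C > 0 such that for every estimator F̂, i.e., every measurable function F̂ : (ℝ^p)^n → ℝ of a sample X_1, …, X_n drawn i.i.d. from N(0, Σ), the worst-case risk over the class D_p of diagonal covariance matrices satisfies sup_{Σ ∈ D_p} E_Σ[(F̂(X_1,…,X_n) − ‖Σ‖_F²)²] ≥ C · p/n, where ‖Σ‖_F² = Σ_{i,j} σ_ij² is the squared Frobenius norm. -/

import Mathlib

open MeasureTheory ProbabilityTheory Matrix ENNReal Classical

/-- The standard Gaussian measure on `ι → ℝ` (i.i.d. standard normals). -/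
noncomputable def stdGaussian (ι : Type*) [Fintype ι] : Measure (ι → ℝ) :=
  Measure.pi fun _ => gaussianReal 0 1

/-- The centered Gaussian measure `N(0, S)` on `ι → ℝ` with covariance matrix `S`,
realized as the pushforward of the standard Gaussian by the positive semidefinite
square root of `S`. (Junk value if `S` is not positive semidefinite.) -/
noncomputable def gaussianVec {ι : Type*} [Fintype ι] [DecidableEq ι]
    (S : Matrix ι ι ℝ) : Measure (ι → ℝ) :=
  if h : S.PosSemidef then (stdGaussian ι).map
    ((h.1.eigenvectorUnitary : Matrix ι ι ℝ) *
      diagonal (RCLike.ofReal ∘ Real.sqrt ∘ h.1.eigenvalues) *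
      (star h.1.eigenvectorUnitary : Matrix ι ι ℝ)).mulVec else stdGaussian ι

/-- The law of a sample of `n` i.i.d. observations from `N(0, S)`. -/
noncomputable def sampleMeasure {ι : Type*} [Fintype ι] [DecidableEq ι]
    (n : ℕ) (S : Matrix ι ι ℝ) : Measure (Fin n → ι → ℝ) :=
  Measure.pi fun _ => gaussianVec S

open Real
open scoped NNReal ENNReal

section AuxMeasure

theorem lintegral_fin_pi_prod {n : ℕ} {E : Type*} [MeasurableSpace E]
    (μ : Fin n → Measure E) [∀ i, SigmaFinite (μ i)]
    (f : Fin n → E → ℝ≥0∞) (hf : ∀ i, Measurable (f i)) :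
    ∫⁻ x, ∏ i, f i (x i) ∂Measure.pi μ = ∏ i, ∫⁻ x, f i x ∂μ i := by
  induction n with
  | zero => simp
  | succ n ih =>
    have mp := measurePreserving_piFinSuccAbove μ 0
    have hmeas : Measurable fun y : E × (Fin n → E) =>
        f 0 y.1 * ∏ j : Fin n, f ((0 : Fin (n+1)).succAbove j) (y.2 j) := by
      apply Measurable.mul
      · exact (hf 0).comp measurable_fst
      · exact Finset.measurable_prod _ fun j _ =>
          (hf _).comp ((measurable_pi_apply j).comp measurable_snd)
    calc ∫⁻ x, ∏ i, f i (x i) ∂Measure.pi μ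
        = ∫⁻ y, f 0 y.1 * ∏ j : Fin n, f ((0 : Fin (n+1)).succAbove j) (y.2 j)
            ∂((μ 0).prod (Measure.pi fun j => μ ((0 : Fin (n+1)).succAbove j))) := by
          rw [← mp.lintegral_comp hmeas]
          refine lintegral_congr fun x => ?_
          rw [Fin.prod_univ_succ]
          congr 1
      _ = (∫⁻ x, f 0 x ∂μ 0) * ∏ j : Fin n,
            ∫⁻ x, f ((0 : Fin (n+1)).succAbove j) x ∂μ ((0 : Fin (n+1)).succAbove j) := by
          rw [lintegral_prod_mul (f := f 0)
            (g := fun y : Fin n → E => ∏ j : Fin n, f ((0 : Fin (n+1)).succAbove j) (y j))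
            ((hf 0).aemeasurable)
            ((Finset.measurable_prod _ fun j _ =>
              (hf _).comp (measurable_pi_apply j)).aemeasurable)]
          rw [ih _ _ (fun j => hf _)]
      _ = ∏ i, ∫⁻ x, f i x ∂μ i := by
          rw [Fin.prod_univ_succ]
          congr 1

theorem map_pi_coord {n : ℕ} {E F : Type*} [MeasurableSpace E] [MeasurableSpace F]
    (μ : Fin n → Measure E) [∀ i, SigmaFinite (μ i)] (g : E → F)
    (hg : Measurable g) (hsf : ∀ i, SigmaFinite ((μ i).map g)) :
    (Measure.pi μ).map (fun x (i : Fin n) => g (x i)) = Measure.pi (fun i => (μ i).map g) := by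
  haveI := hsf
  refine (Measure.pi_eq fun s hs => ?_).symm
  have hgm : Measurable (fun (x : Fin n → E) (i : Fin n) => g (x i)) :=
    measurable_pi_lambda _ fun i => hg.comp (measurable_pi_apply i)
  rw [Measure.map_apply hgm (MeasurableSet.univ_pi hs)]
  have hpre : (fun x (i : Fin n) => g (x i)) ⁻¹' Set.pi Set.univ s
      = Set.pi Set.univ (fun i => g ⁻¹' s i) := by
    ext x; simp [Set.mem_pi]
  rw [hpre, Measure.pi_pi]
  exact Finset.prod_congr rfl fun i _ => (Measure.map_apply hg (hs i)).symm

theorem pi_withDensity_eq {n : ℕ} {E : Type*} [MeasurableSpace E]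
    (μ : Fin n → Measure E) [∀ i, SigmaFinite (μ i)]
    (f : Fin n → E → ℝ≥0∞) (hf : ∀ i, Measurable (f i))
    (hsf : ∀ i, SigmaFinite ((μ i).withDensity (f i))) :
    Measure.pi (fun i => (μ i).withDensity (f i))
      = (Measure.pi μ).withDensity (fun x => ∏ i, f i (x i)) := by
  haveI := hsf
  refine Measure.pi_eq fun s hs => ?_
  rw [withDensity_apply _ (MeasurableSet.univ_pi hs)]
  have key : ∫⁻ x in Set.pi Set.univ s, ∏ i, f i (x i) ∂Measure.pi μ
      = ∫⁻ x, ∏ i, (s i).indicator (f i) (x i) ∂Measure.pi μ := by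
    rw [← lintegral_indicator (MeasurableSet.univ_pi hs)]
    congr 1
    ext x
    by_cases hx : x ∈ Set.pi Set.univ s
    · rw [Set.indicator_of_mem hx]
      exact Finset.prod_congr rfl fun i _ => (Set.indicator_of_mem (hx i trivial) _).symm
    · rw [Set.indicator_of_notMem hx]
      rw [Set.mem_univ_pi] at hx
      push_neg at hx
      obtain ⟨i, hi⟩ := hx
      exact (Finset.prod_eq_zero (Finset.mem_univ i) (Set.indicator_of_notMem hi _)).symm
  rw [key, lintegral_fin_pi_prod μ _ (fun i => (hf i).indicator (hs i))]
  exact Finset.prod_congr rfl fun i _ => by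
    rw [lintegral_indicator (hs i), ← withDensity_apply _ (hs i)]

end AuxMeasure

section AuxGaussian

lemma sqrt_gaussian_pdf_mul (v : ℝ≥0) (hv : 0 < (v:ℝ)) (x : ℝ) :
    Real.sqrt (gaussianPDFReal 0 1 x * gaussianPDFReal 0 v x)
      = (Real.sqrt (2 * π * Real.sqrt v))⁻¹ * Real.exp (-((1 + v)/(4*v)) * x^2) := by
  have hπ : 0 < π := Real.pi_pos
  rw [gaussianPDFReal, gaussianPDFReal]
  have hrw : ((Real.sqrt (2 * π * (1:ℝ≥0)))⁻¹ * Real.exp (-(x - 0)^2 / (2 * (1:ℝ≥0)))) *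
      ((Real.sqrt (2 * π * v))⁻¹ * Real.exp (-(x - 0)^2 / (2 * v)))
      = ((2 * π * Real.sqrt v))⁻¹ *
        Real.exp ((-(x)^2 / 2) + (-(x)^2 / (2*v))) := by
    rw [Real.exp_add]
    have h1 : Real.sqrt (2 * π * ((1:ℝ≥0):ℝ)) * Real.sqrt (2 * π * v)
        = 2 * π * Real.sqrt v := by
      rw [← Real.sqrt_mul (by positivity)]
      have h2 : (2 * π * ((1:ℝ≥0):ℝ)) * (2 * π * v) = (2*π)^2 * v := by push_cast; ring
      rw [h2, Real.sqrt_mul (sq_nonneg _), Real.sqrt_sq (by positivity)]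
    rw [← h1]
    push_cast
    ring
  rw [hrw, Real.sqrt_mul (by positivity), Real.sqrt_inv, ← Real.exp_half]
  congr 1
  have hv' : (v:ℝ) ≠ 0 := ne_of_gt hv
  field_simp
  ring

lemma integral_sqrt_gaussian (v : ℝ≥0) (hv : 0 < (v:ℝ)) :
    ∫ x : ℝ, Real.sqrt (gaussianPDFReal 0 1 x * gaussianPDFReal 0 v x)
      = Real.sqrt (2 * Real.sqrt v / (1 + v)) := by
  have hπ : 0 < π := Real.pi_pos
  have hb : 0 < ((1 + v)/(4*v) : ℝ) := by positivity
  simp_rw [sqrt_gaussian_pdf_mul v hv]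
  rw [MeasureTheory.integral_const_mul, integral_gaussian]
  rw [← Real.sqrt_inv, ← Real.sqrt_mul (by positivity)]
  congr 1
  have hs : Real.sqrt v * Real.sqrt v = (v:ℝ) := Real.mul_self_sqrt v.2
  have hsv : 0 < Real.sqrt v := Real.sqrt_pos.mpr hv
  field_simp
  linear_combination (-4:ℝ) * hs

lemma lintegral_sqrt_gaussian (v : ℝ≥0) (hv : 0 < (v:ℝ)) :
    ∫⁻ x : ℝ, ENNReal.ofReal (Real.sqrt (gaussianPDFReal 0 1 x * gaussianPDFReal 0 v x))
      = ENNReal.ofReal (Real.sqrt (2 * Real.sqrt v / (1 + v))) := by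
  rw [← integral_sqrt_gaussian v hv, ofReal_integral_eq_lintegral_ofReal]
  · have hb : 0 < ((1 + v)/(4*v) : ℝ) := by positivity
    have h : (fun x : ℝ => Real.sqrt (gaussianPDFReal 0 1 x * gaussianPDFReal 0 v x))
        = fun x => (Real.sqrt (2 * π * Real.sqrt v))⁻¹ * Real.exp (-((1 + v)/(4*v)) * x^2) := by
      ext x; exact sqrt_gaussian_pdf_mul v hv x
    rw [h]
    exact (integrable_exp_neg_mul_sq hb).const_mul _
  · exact ae_of_all _ fun x => Real.sqrt_nonneg _

lemma real_sqrt_prod {ι : Type*} (s : Finset ι) (f : ι → ℝ) (h : ∀ i ∈ s, 0 ≤ f i) :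
    Real.sqrt (∏ i ∈ s, f i) = ∏ i ∈ s, Real.sqrt (f i) := by
  induction s using Finset.cons_induction with
  | empty => simp
  | cons a s ha ih =>
    rw [Finset.prod_cons, Finset.prod_cons,
      Real.sqrt_mul (h a (Finset.mem_cons_self a s)),
      ih (fun i hi => h i (Finset.mem_cons_of_mem hi))]

lemma pointwise_two_point_bound (a f0 f1 u0 u1 : ℝ) (h0 : 0 ≤ u0) (h1 : 0 ≤ u1) :
    (f0 - f1)^2 * (u0 * u1 / (u0 + u1)) ≤ (a - f0)^2 * u0 + (a - f1)^2 * u1 := by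
  rcases eq_or_lt_of_le (add_nonneg h0 h1) with h|h
  · have hu0 : u0 = 0 := by linarith
    have hu1 : u1 = 0 := by linarith
    subst hu0; subst hu1
    simp
  · rw [mul_div_assoc']
    rw [div_le_iff₀ h]
    nlinarith [sq_nonneg ((a - f0)*u0 + (a - f1)*u1), sq_nonneg (a - f0), sq_nonneg (a - f1),
      mul_nonneg h0 h1]

end AuxGaussian

section AuxSample

lemma gaussianVec_diag (p : ℕ) (v : ℝ≥0) :
    gaussianVec (Matrix.diagonal (fun _ : Fin p => (v:ℝ)))
      = Measure.pi (fun _ : Fin p => gaussianReal 0 v) := by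
  have hpsd : (Matrix.diagonal (fun _ : Fin p => (v:ℝ))).PosSemidef :=
    Matrix.posSemidef_diagonal_iff.mpr (fun i => v.2)
  have hsqpsd : (Matrix.diagonal (fun _ : Fin p => Real.sqrt v)).PosSemidef :=
    Matrix.posSemidef_diagonal_iff.mpr (fun i => Real.sqrt_nonneg _)
  have hsq : ((hpsd.1.eigenvectorUnitary : Matrix (Fin p) (Fin p) ℝ) *
      diagonal (RCLike.ofReal ∘ Real.sqrt ∘ hpsd.1.eigenvalues) *
      (star hpsd.1.eigenvectorUnitary : Matrix (Fin p) (Fin p) ℝ))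
      = Matrix.diagonal (fun _ : Fin p => Real.sqrt v) := by
    have he : ∀ i, hpsd.1.eigenvalues i = v := by
      have h := hpsd.1.conjStarAlgAut_star_eigenvectorUnitary
      have hA : diagonal (fun _ : Fin p => (v:ℝ)) = algebraMap ℝ (Matrix (Fin p) (Fin p) ℝ) v := by
        rw [Matrix.algebraMap_eq_diagonal]; rfl
      have h2 : algebraMap ℝ (Matrix (Fin p) (Fin p) ℝ) (v:ℝ)
          = diagonal (RCLike.ofReal ∘ hpsd.1.eigenvalues) := by
        have h3 : Unitary.conjStarAlgAut ℝ (Matrix (Fin p) (Fin p) ℝ)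
            (star hpsd.1.eigenvectorUnitary) (algebraMap ℝ (Matrix (Fin p) (Fin p) ℝ) (v:ℝ))
            = diagonal (RCLike.ofReal ∘ hpsd.1.eigenvalues) := by
          rw [← hA]; exact h
        rwa [AlgHomClass.commutes] at h3
      intro i
      have := congrFun (congrFun h2 i) i
      simpa [Matrix.algebraMap_matrix_apply] using this.symm
    have hd : diagonal (RCLike.ofReal ∘ Real.sqrt ∘ hpsd.1.eigenvalues)
        = Real.sqrt v • (1 : Matrix (Fin p) (Fin p) ℝ) := by
      ext i j
      by_cases hij : i = j
      · subst hij; simp [he]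
      · simp [hij]
    rw [hd, Matrix.mul_smul, mul_one, Matrix.smul_mul, ← Unitary.coe_star, Unitary.coe_mul_star_self]
    ext i j
    by_cases hij : i = j
    · subst hij; simp
    · simp [hij]
  rw [gaussianVec, dif_pos hpsd, hsq]
  have hmv : (Matrix.diagonal (fun _ : Fin p => Real.sqrt v)).mulVec
      = fun (x : Fin p → ℝ) (i : Fin p) => (fun y : ℝ => Real.sqrt ↑v * y) (x i) := by
    funext x i
    exact Matrix.mulVec_diagonal _ _ _
  have hmapped : ∀ _i : Fin p, ((gaussianReal 0 1).map (fun y : ℝ => Real.sqrt ↑v * y))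
      = gaussianReal 0 v := by
    intro i
    have h := gaussianReal_map_const_mul (μ := 0) (v := 1) (Real.sqrt (v:ℝ))
    have h2 : (fun y : ℝ => Real.sqrt ↑v * y) = (Real.sqrt (v:ℝ) * ·) := rfl
    rw [h2, h]
    congr 1
    · ring
    · refine NNReal.coe_injective ?_
      push_cast
      rw [mul_one]
      exact Real.sq_sqrt v.2
  rw [hmv, _root_.stdGaussian,
    map_pi_coord (fun _ : Fin p => gaussianReal 0 1) _ (measurable_const_mul _)
      (fun i => by rw [hmapped i]; infer_instance)]
  exact congrArg _ (funext fun i => hmapped i)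

lemma sample_diag_eq (n p : ℕ) (v : ℝ≥0) (hv : v ≠ 0) :
    sampleMeasure n (Matrix.diagonal (fun _ : Fin p => (v:ℝ)))
      = (Measure.pi fun _ : Fin n =>
          (Measure.pi fun _ : Fin p => (volume : Measure ℝ))).withDensity
          (fun X => ENNReal.ofReal (∏ k, ∏ i, gaussianPDFReal 0 v (X k i))) := by
  have hgr : gaussianReal 0 v = volume.withDensity (gaussianPDF 0 v) :=
    gaussianReal_of_var_ne_zero 0 hv
  have hinst1 : ∀ _i : Fin p, SigmaFinite (volume.withDensity (gaussianPDF 0 v)) := by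
    intro i
    rw [← hgr]
    infer_instance
  have hinner : Measure.pi (fun _ : Fin p => gaussianReal 0 v)
      = (Measure.pi fun _ : Fin p => (volume : Measure ℝ)).withDensity
          (fun y => ∏ i, gaussianPDF 0 v (y i)) := by
    calc Measure.pi (fun _ : Fin p => gaussianReal 0 v)
        = Measure.pi (fun _ : Fin p => volume.withDensity (gaussianPDF 0 v)) := by
          exact congrArg _ (funext fun i => hgr)
      _ = (Measure.pi fun _ : Fin p => (volume : Measure ℝ)).withDensity
          (fun y => ∏ i, gaussianPDF 0 v (y i)) :=
          pi_withDensity_eq (fun _ : Fin p => (volume : Measure ℝ)) (fun _ => gaussianPDF 0 v) (fun i => measurable_gaussianPDF 0 v) (fun i => hinst1 i)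
  have hinst2 : ∀ _k : Fin n, SigmaFinite
      ((Measure.pi fun _ : Fin p => (volume : Measure ℝ)).withDensity
        (fun y => ∏ i, gaussianPDF 0 v (y i))) := by
    intro k
    rw [← hinner]
    infer_instance
  have houter : sampleMeasure n (Matrix.diagonal (fun _ : Fin p => (v:ℝ)))
      = (Measure.pi fun _ : Fin n =>
          (Measure.pi fun _ : Fin p => (volume : Measure ℝ))).withDensity
          (fun X => ∏ k, ∏ i, gaussianPDF 0 v (X k i)) := by
    calc sampleMeasure n (Matrix.diagonal (fun _ : Fin p => (v:ℝ)))
        = Measure.pi (fun _ : Fin n =>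
            (Measure.pi fun _ : Fin p => (volume : Measure ℝ)).withDensity
              (fun y => ∏ i, gaussianPDF 0 v (y i))) := by
          rw [sampleMeasure, gaussianVec_diag p v]
          exact congrArg _ (funext fun k => hinner)
      _ = _ := pi_withDensity_eq
            (fun _ : Fin n => (Measure.pi fun _ : Fin p => (volume : Measure ℝ)))
            (fun _ y => ∏ i, gaussianPDF 0 v (y i))
            (fun k => Finset.measurable_prod _ fun i _ =>
              (measurable_gaussianPDF 0 v).comp (measurable_pi_apply i))
            (fun k => hinst2 k)
  rw [houter]
  congr 1
  funext X
  rw [ENNReal.ofReal_prod_of_nonneg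
    (fun k _ => Finset.prod_nonneg fun i _ => gaussianPDFReal_nonneg 0 v _)]
  exact Finset.prod_congr rfl fun k _ => (ENNReal.ofReal_prod_of_nonneg
    (fun i _ => gaussianPDFReal_nonneg 0 v _)).symm

lemma frob_diag (p : ℕ) (c : ℝ) :
    ∑ i : Fin p, ∑ j : Fin p, ((Matrix.diagonal (fun _ : Fin p => c)) i j)^2
      = (p : ℝ) * c^2 := by
  have h : ∀ i : Fin p, ∑ j : Fin p, ((Matrix.diagonal (fun _ : Fin p => c)) i j)^2 = c^2 := by
    intro i
    rw [Finset.sum_eq_single i]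
    · rw [Matrix.diagonal_apply_eq]
    · intro j _ hj
      rw [Matrix.diagonal_apply_ne' _ hj, zero_pow two_ne_zero]
    · intro h; exact absurd (Finset.mem_univ i) h
  rw [Finset.sum_congr rfl fun i _ => h i, Finset.sum_const, Finset.card_univ,
    Fintype.card_fin, nsmul_eq_mul]

end AuxSample

set_option maxHeartbeats 4000000 in
/-- Proposition 1 (second claim): there is a universal constant `C > 0` such that for every
estimator `F̂` of the squared Frobenius norm `‖Σ‖_F² = ∑_{i,j} σ_ij²`, the worst-case risk
over diagonal covariance matrices with entries bounded by 1 is at least `C p / n`. -/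
theorem frobenius_functional_lower_bound :
    ∃ C : ℝ, 0 < C ∧
      ∀ (n p : ℕ), 1 ≤ n → 1 ≤ p →
        ∀ Fhat : (Fin n → Fin p → ℝ) → ℝ, Measurable Fhat →
          ∃ S : Matrix (Fin p) (Fin p) ℝ,
            S.PosSemidef ∧ (∀ i j, i ≠ j → S i j = 0) ∧ (∀ i, S i i ≤ 1) ∧
            ENNReal.ofReal (C * p / n) ≤
              ∫⁻ X, ENNReal.ofReal ((Fhat X - ∑ i, ∑ j, (S i j) ^ 2) ^ 2)
                ∂(sampleMeasure n S) := by
  classical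
  refine ⟨3/64, by norm_num, ?_⟩
  intro n p hn hp Fhat hF
  have hn0 : 0 < (n:ℝ) := by exact_mod_cast hn
  have hp0 : 0 < (p:ℝ) := by exact_mod_cast hp
  have hn1 : (1:ℝ) ≤ (n:ℝ) := by exact_mod_cast hn
  have hp1 : (1:ℝ) ≤ (p:ℝ) := by exact_mod_cast hp
  have hNR : (1:ℝ) ≤ ((n*p : ℕ):ℝ) := by
    push_cast
    nlinarith
  have hNRpos : 0 < ((n*p : ℕ):ℝ) := by linarith
  have hsN : (1:ℝ) ≤ Real.sqrt ((n*p : ℕ):ℝ) := by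
    rw [show (1:ℝ) = Real.sqrt 1 from (Real.sqrt_one).symm]
    exact Real.sqrt_le_sqrt hNR
  have hsNpos : 0 < Real.sqrt ((n*p:ℕ):ℝ) := by linarith
  set δ : ℝ := 1/(2*Real.sqrt ((n*p:ℕ):ℝ)) with hδdef
  have hδpos : 0 < δ := by positivity
  have hδhalf : δ ≤ 1/2 := by
    rw [hδdef, div_le_div_iff₀ (by positivity) (by norm_num)]
    linarith
  have hδsq : ((n*p:ℕ):ℝ) * δ^2 = 1/4 := by
    rw [hδdef, div_pow, mul_pow, Real.sq_sqrt (le_of_lt hNRpos)]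
    field_simp
    ring
  set v : ℝ≥0 := Real.toNNReal (1-δ) with hvdef
  have hvco : (v:ℝ) = 1-δ := Real.coe_toNNReal _ (by linarith)
  have hv0 : 0 < (v:ℝ) := by rw [hvco]; linarith
  have hvne : v ≠ 0 := by
    intro h
    rw [h] at hv0
    exact lt_irrefl _ (by exact_mod_cast hv0)
  have hv1 : (v:ℝ) ≤ 1 := by rw [hvco]; linarith
  -- the base measure and densities
  set Λ : Measure (Fin n → Fin p → ℝ) :=
    Measure.pi (fun _ : Fin n => Measure.pi (fun _ : Fin p => (volume : Measure ℝ))) with hΛdef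
  set P : ℝ≥0 → (Fin n → Fin p → ℝ) → ℝ :=
    fun w X => ∏ k, ∏ i, gaussianPDFReal 0 w (X k i) with hPdef
  have hPmeas : ∀ w, Measurable (P w) := fun w =>
    Finset.measurable_prod _ fun k _ => Finset.measurable_prod _ fun i _ =>
      (measurable_gaussianPDFReal 0 w).comp ((measurable_pi_apply i).comp (measurable_pi_apply k))
  have hPnn : ∀ w X, 0 ≤ P w X := fun w X =>
    Finset.prod_nonneg fun k _ => Finset.prod_nonneg fun i _ => gaussianPDFReal_nonneg 0 w _
  have hPpos : ∀ (w : ℝ≥0), w ≠ 0 → ∀ X, 0 < P w X := fun w hw X =>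
    Finset.prod_pos fun k _ => Finset.prod_pos fun i _ => gaussianPDFReal_pos 0 w _ hw
  have hsample : ∀ (w : ℝ≥0), w ≠ 0 →
      sampleMeasure n (Matrix.diagonal (fun _ : Fin p => (w:ℝ)))
        = Λ.withDensity (fun X => ENNReal.ofReal (P w X)) :=
    fun w hw => sample_diag_eq n p w hw
  -- risks
  set R : ℝ≥0 → ℝ≥0∞ := fun w => ∫⁻ X, ENNReal.ofReal ((Fhat X - (p:ℝ) * (w:ℝ)^2)^2)
      ∂sampleMeasure n (Matrix.diagonal (fun _ : Fin p => (w:ℝ))) with hRdef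
  have hqmeas : ∀ w : ℝ≥0, Measurable fun X => ENNReal.ofReal ((Fhat X - (p:ℝ)*(w:ℝ)^2)^2) :=
    fun w => ((hF.sub measurable_const).pow_const 2).ennreal_ofReal
  have hRform : ∀ (w : ℝ≥0), w ≠ 0 → R w
      = ∫⁻ X, ENNReal.ofReal (P w X * (Fhat X - (p:ℝ)*(w:ℝ)^2)^2) ∂Λ := by
    intro w hw
    rw [hRdef]
    simp only []
    rw [hsample w hw,
      lintegral_withDensity_eq_lintegral_mul _ ((hPmeas w).ennreal_ofReal) (hqmeas w)]
    refine lintegral_congr fun X => ?_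
    simp only [Pi.mul_apply]
    rw [← ENNReal.ofReal_mul (hPnn w X)]
  -- two-point quantities
  set F0 : ℝ := (p:ℝ) * ((1:ℝ≥0):ℝ)^2 with hF0def
  set F1 : ℝ := (p:ℝ) * ((v:ℝ))^2 with hF1def
  set W : (Fin n → Fin p → ℝ) → ℝ :=
    fun X => P 1 X * P v X / (P 1 X + P v X) with hWdef
  have hWnn : ∀ X, 0 ≤ W X := fun X => by
    have := hPnn 1 X; have := hPnn v X
    positivity
  have hWmeas : Measurable W :=
    ((hPmeas 1).mul (hPmeas v)).div ((hPmeas 1).add (hPmeas v))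
  set B : ℝ≥0∞ := ∫⁻ X, ENNReal.ofReal (W X) ∂Λ with hBdef
  -- step 1 : sum of risks dominates the overlap integral
  have key1 : ∫⁻ X, ENNReal.ofReal ((F0-F1)^2 * W X) ∂Λ ≤ R 1 + R v := by
    rw [hRform 1 one_ne_zero, hRform v hvne,
      ← lintegral_add_left (f := fun X => ENNReal.ofReal (P 1 X * (Fhat X - (p:ℝ)*((1:ℝ≥0):ℝ)^2)^2)) (by exact ((hPmeas 1).mul ((hF.sub measurable_const).pow_const 2)).ennreal_ofReal)]
    refine lintegral_mono fun X => ?_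
    rw [← ENNReal.ofReal_add (mul_nonneg (hPnn 1 X) (sq_nonneg _))
      (mul_nonneg (hPnn v X) (sq_nonneg _))]
    refine ENNReal.ofReal_le_ofReal ?_
    have h := pointwise_two_point_bound (Fhat X) F0 F1 (P 1 X) (P v X) (hPnn 1 X) (hPnn v X)
    calc (F0-F1)^2 * W X ≤ (Fhat X - F0)^2 * P 1 X + (Fhat X - F1)^2 * P v X := h
      _ = P 1 X * (Fhat X - F0)^2 + P v X * (Fhat X - F1)^2 := by ring
      _ = P 1 X * (Fhat X - (p:ℝ)*((1:ℝ≥0):ℝ)^2)^2 + P v X * (Fhat X - (p:ℝ)*((v:ℝ))^2)^2 := by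
          rw [hF0def, hF1def]
  have key2 : ENNReal.ofReal ((F0-F1)^2) * B ≤ R 1 + R v := by
    refine le_trans (le_of_eq ?_) key1
    rw [hBdef, ← lintegral_const_mul' _ _ ENNReal.ofReal_ne_top]
    refine lintegral_congr fun X => ?_
    rw [← ENNReal.ofReal_mul (sq_nonneg _)]
  -- total masses
  have hmass : ∀ (w : ℝ≥0), w ≠ 0 → ∫⁻ X, ENNReal.ofReal (P w X) ∂Λ = 1 := by
    intro w hw
    have hpi : sampleMeasure n (Matrix.diagonal (fun _ : Fin p => (w:ℝ)))
        = Measure.pi (fun _ : Fin n => Measure.pi (fun _ : Fin p => gaussianReal 0 w)) := by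
      rw [sampleMeasure]
      exact congrArg _ (funext fun k => gaussianVec_diag p w)
    have huniv : sampleMeasure n (Matrix.diagonal (fun _ : Fin p => (w:ℝ))) Set.univ = 1 := by
      rw [hpi]
      exact measure_univ
    rw [← setLIntegral_univ, ← withDensity_apply _ MeasurableSet.univ, ← hsample w hw, huniv]
  have hM : ∫⁻ X, ENNReal.ofReal (P 1 X + P v X) ∂Λ = 2 := by
    have : ∀ X, ENNReal.ofReal (P 1 X + P v X)
        = ENNReal.ofReal (P 1 X) + ENNReal.ofReal (P v X) :=
      fun X => ENNReal.ofReal_add (hPnn 1 X) (hPnn v X)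
    rw [lintegral_congr this, lintegral_add_left ((hPmeas 1).ennreal_ofReal),
      hmass 1 one_ne_zero, hmass v hvne]
    norm_num
  -- the affinity
  set A1 : ℝ := Real.sqrt (2 * Real.sqrt v / (1+v)) with hA1def
  have hA1nn : 0 ≤ A1 := Real.sqrt_nonneg _
  have hgmes : Measurable fun x : ℝ => ENNReal.ofReal
      (Real.sqrt (gaussianPDFReal 0 1 x * gaussianPDFReal 0 v x)) :=
    (Real.continuous_sqrt.measurable.comp
      ((measurable_gaussianPDFReal 0 1).mul (measurable_gaussianPDFReal 0 v))).ennreal_ofReal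
  have hT : ∫⁻ X, ENNReal.ofReal (Real.sqrt (P 1 X * P v X)) ∂Λ
      = (ENNReal.ofReal A1)^(n*p) := by
    have hpt : ∀ X : Fin n → Fin p → ℝ, ENNReal.ofReal (Real.sqrt (P 1 X * P v X))
        = ∏ k, ∏ i, ENNReal.ofReal
            (Real.sqrt (gaussianPDFReal 0 1 (X k i) * gaussianPDFReal 0 v (X k i))) := by
      intro X
      have h1 : P 1 X * P v X
          = ∏ k, ∏ i, (gaussianPDFReal 0 1 (X k i) * gaussianPDFReal 0 v (X k i)) := by
        rw [hPdef]
        simp only [← Finset.prod_mul_distrib]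
      rw [h1, real_sqrt_prod _ _ (fun k _ => Finset.prod_nonneg fun i _ =>
          mul_nonneg (gaussianPDFReal_nonneg 0 1 _) (gaussianPDFReal_nonneg 0 v _)),
        ENNReal.ofReal_prod_of_nonneg (fun k _ => Real.sqrt_nonneg _)]
      refine Finset.prod_congr rfl fun k _ => ?_
      rw [real_sqrt_prod _ _ (fun i _ =>
          mul_nonneg (gaussianPDFReal_nonneg 0 1 _) (gaussianPDFReal_nonneg 0 v _)),
        ENNReal.ofReal_prod_of_nonneg (fun i _ => Real.sqrt_nonneg _)]
    rw [lintegral_congr hpt]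
    rw [lintegral_fin_pi_prod (fun _ : Fin n => Measure.pi fun _ : Fin p => (volume : Measure ℝ))
      (fun _k y => ∏ i, ENNReal.ofReal
        (Real.sqrt (gaussianPDFReal 0 1 (y i) * gaussianPDFReal 0 v (y i))))
      (fun _k => Finset.measurable_prod _ fun i _ => hgmes.comp (measurable_pi_apply i))]
    have hin : ∀ _k : Fin n, ∫⁻ y : Fin p → ℝ, ∏ i, ENNReal.ofReal
          (Real.sqrt (gaussianPDFReal 0 1 (y i) * gaussianPDFReal 0 v (y i)))
          ∂Measure.pi (fun _ : Fin p => (volume : Measure ℝ))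
        = (ENNReal.ofReal A1)^p := by
      intro k
      rw [lintegral_fin_pi_prod (fun _ : Fin p => (volume : Measure ℝ))
        (fun _i x => ENNReal.ofReal
          (Real.sqrt (gaussianPDFReal 0 1 x * gaussianPDFReal 0 v x)))
        (fun _i => hgmes)]
      rw [Finset.prod_congr rfl fun i _ => lintegral_sqrt_gaussian v hv0, Finset.prod_const,
        Finset.card_univ, Fintype.card_fin, hA1def]
    rw [Finset.prod_congr rfl fun k _ => hin k, Finset.prod_const, Finset.card_univ,
      Fintype.card_fin, ← pow_mul, mul_comm p n]
  -- Cauchy-Schwarz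
  have hhalf : ∀ x : ℝ≥0∞, (x ^ ((1:ℝ)/2)) ^ (2:ℕ) = x := by
    intro x
    rw [← ENNReal.rpow_natCast (x ^ ((1:ℝ)/2)) 2, ← ENNReal.rpow_mul]
    norm_num
  have hCS : ((ENNReal.ofReal A1)^(n*p))^(2:ℕ) ≤ B * 2 := by
    have hHold := ENNReal.lintegral_mul_norm_pow_le (μ := Λ)
      (f := fun X => ENNReal.ofReal (W X))
      (g := fun X => ENNReal.ofReal (P 1 X + P v X))
      (hWmeas.ennreal_ofReal.aemeasurable)
      (((hPmeas 1).add (hPmeas v)).ennreal_ofReal.aemeasurable)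
      (by norm_num : (0:ℝ) ≤ 1/2) (by norm_num : (0:ℝ) ≤ 1/2) (by norm_num)
    have hpt2 : ∀ X, (ENNReal.ofReal (W X)) ^ ((1:ℝ)/2)
          * (ENNReal.ofReal (P 1 X + P v X)) ^ ((1:ℝ)/2)
        = ENNReal.ofReal (Real.sqrt (P 1 X * P v X)) := by
      intro X
      have hadd : (0:ℝ) ≤ P 1 X + P v X := add_nonneg (hPnn 1 X) (hPnn v X)
      have haddpos : (0:ℝ) < P 1 X + P v X := add_pos (hPpos 1 one_ne_zero X) (hPpos v hvne X)
      rw [ENNReal.ofReal_rpow_of_nonneg (hWnn X) (by norm_num),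
        ENNReal.ofReal_rpow_of_nonneg hadd (by norm_num),
        ← ENNReal.ofReal_mul (Real.rpow_nonneg (hWnn X) _)]
      congr 1
      rw [← Real.sqrt_eq_rpow, ← Real.sqrt_eq_rpow, ← Real.sqrt_mul (hWnn X)]
      congr 1
      simp only [hWdef]
      exact div_mul_cancel₀ _ (ne_of_gt haddpos)
    have hTle : (ENNReal.ofReal A1)^(n*p) ≤ B ^ ((1:ℝ)/2) * (2:ℝ≥0∞) ^ ((1:ℝ)/2) := by
      calc (ENNReal.ofReal A1)^(n*p)
          = ∫⁻ X, ENNReal.ofReal (Real.sqrt (P 1 X * P v X)) ∂Λ := hT.symm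
        _ = ∫⁻ X, (ENNReal.ofReal (W X)) ^ ((1:ℝ)/2)
              * (ENNReal.ofReal (P 1 X + P v X)) ^ ((1:ℝ)/2) ∂Λ :=
            (lintegral_congr hpt2).symm
        _ ≤ (∫⁻ X, ENNReal.ofReal (W X) ∂Λ) ^ ((1:ℝ)/2)
              * (∫⁻ X, ENNReal.ofReal (P 1 X + P v X) ∂Λ) ^ ((1:ℝ)/2) := hHold
        _ = B ^ ((1:ℝ)/2) * (2:ℝ≥0∞) ^ ((1:ℝ)/2) := by rw [hM]
    calc ((ENNReal.ofReal A1)^(n*p))^(2:ℕ)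
        ≤ ((B ^ ((1:ℝ)/2)) * ((2:ℝ≥0∞) ^ ((1:ℝ)/2)))^(2:ℕ) := pow_le_pow_left' hTle 2
      _ = B * 2 := by rw [mul_pow, hhalf, hhalf]
  -- lower bound for the affinity
  have hTlb : ENNReal.ofReal (3/4 : ℝ) ≤ ((ENNReal.ofReal A1)^(n*p))^(2:ℕ) := by
    have hδsq' : δ^2 ≤ 1/4 := by nlinarith
    have h1δ : (0:ℝ) ≤ 1 - δ^2 := by nlinarith
    have hA1sq : A1^2 = 2 * Real.sqrt v / (1+v) := Real.sq_sqrt (by positivity)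
    have hρ : (1 - δ^2 : ℝ) ≤ A1^2 := by
      rw [hA1sq]
      have hs2 : Real.sqrt (v:ℝ) ^ 2 = (v:ℝ) := Real.sq_sqrt v.2
      have hsnn : 0 ≤ Real.sqrt (v:ℝ) := Real.sqrt_nonneg _
      have hsle1 : Real.sqrt (v:ℝ) ≤ 1 := by
        rw [show (1:ℝ) = Real.sqrt 1 from (Real.sqrt_one).symm]
        exact Real.sqrt_le_sqrt hv1
      have hsgev : (v:ℝ) ≤ Real.sqrt (v:ℝ) := by nlinarith
      have h1ms : 1 - Real.sqrt (v:ℝ) ≤ δ := by linarith [hsgev, hvco.ge, hvco.le]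
      have hss : (1 - Real.sqrt (v:ℝ)) * (1 - Real.sqrt (v:ℝ)) ≤ δ * δ :=
        mul_self_le_mul_self (by linarith) h1ms
      have hvv : (0:ℝ) ≤ δ * δ * (v:ℝ) := by positivity
      rw [le_div_iff₀ (by positivity : (0:ℝ) < 1 + (v:ℝ))]
      nlinarith [hss, hvv, hs2]
    calc ENNReal.ofReal (3/4 : ℝ)
        = ENNReal.ofReal ((1 + ((n*p:ℕ):ℝ) * (-δ^2))) := by
          congr 1
          linarith [hδsq]
      _ ≤ ENNReal.ofReal ((1 + (-δ^2))^(n*p)) := by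
          refine ENNReal.ofReal_le_ofReal ?_
          exact one_add_mul_le_pow (by nlinarith : (-2:ℝ) ≤ -δ^2) (n*p)
      _ = ENNReal.ofReal ((1 - δ^2)^(n*p)) := by
          rw [show (1 + -δ^2 : ℝ) = 1 - δ^2 from by ring]
      _ = (ENNReal.ofReal (1 - δ^2))^(n*p) := ENNReal.ofReal_pow h1δ _
      _ ≤ (ENNReal.ofReal (A1^2))^(n*p) :=
          pow_le_pow_left' (ENNReal.ofReal_le_ofReal hρ) _
      _ = ((ENNReal.ofReal A1)^(2:ℕ))^(n*p) := by rw [ENNReal.ofReal_pow hA1nn]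
      _ = ((ENNReal.ofReal A1)^(n*p))^(2:ℕ) := by rw [← pow_mul, ← pow_mul, mul_comm]
  have hB : ENNReal.ofReal (3/8 : ℝ) ≤ B := by
    have hB34 : ENNReal.ofReal (3/4 : ℝ) ≤ B * 2 := le_trans hTlb hCS
    have h38 : ENNReal.ofReal (3/4 : ℝ) = ENNReal.ofReal (3/8 : ℝ) * 2 := by
      rw [show ((2:ℝ≥0∞)) = ENNReal.ofReal (2:ℝ) from (ENNReal.ofReal_ofNat 2).symm,
        ← ENNReal.ofReal_mul (by norm_num)]
      norm_num
    rw [h38] at hB34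
    exact (ENNReal.mul_le_mul_iff_left (by norm_num) (by norm_num)).mp hB34
  -- separation
  have hΔ : (p:ℝ)*δ ≤ F0 - F1 := by
    rw [hF0def, hF1def, hvco]
    push_cast
    nlinarith [mul_nonneg (mul_nonneg hp0.le hδpos.le) (show (0:ℝ) ≤ 1 - δ by linarith)]
  have hΔnn : 0 ≤ F0 - F1 := le_trans (by positivity) hΔ
  have hsep : (p:ℝ)/(4*(n:ℝ)) ≤ (F0-F1)^2 := by
    have h1 : ((p:ℝ)*δ)^2 ≤ (F0-F1)^2 := by
      have := pow_le_pow_left₀ (by positivity : (0:ℝ) ≤ (p:ℝ)*δ) hΔ 2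
      exact this
    have h2 : ((p:ℝ)*δ)^2 = (p:ℝ)/(4*(n:ℝ)) := by
      have hd2 : δ^2 = 1/(4*((n*p:ℕ):ℝ)) := by
        field_simp at hδsq ⊢
        linarith
      rw [mul_pow, hd2]
      push_cast
      field_simp
    linarith
  -- final bound on the sum
  have hfinal : ENNReal.ofReal (2 * (3/64 * (p:ℝ) / (n:ℝ))) ≤ R 1 + R v := by
    refine le_trans ?_ key2
    calc ENNReal.ofReal (2 * (3/64 * (p:ℝ) / (n:ℝ)))
        ≤ ENNReal.ofReal ((F0-F1)^2 * (3/8)) := by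
          refine ENNReal.ofReal_le_ofReal ?_
          have h2 : 2 * (3/64 * (p:ℝ)/(n:ℝ)) = (3/8) * ((p:ℝ)/(4*(n:ℝ))) := by
            field_simp
            ring
          rw [h2, mul_comm ((F0-F1)^2) (3/8:ℝ)]
          exact mul_le_mul_of_nonneg_left hsep (by norm_num)
      _ = ENNReal.ofReal ((F0-F1)^2) * ENNReal.ofReal (3/8 : ℝ) :=
          ENNReal.ofReal_mul (sq_nonneg _)
      _ ≤ ENNReal.ofReal ((F0-F1)^2) * B := mul_le_mul_right hB _
  -- conclusion : pick the worse of the two hypotheses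
  have hsum2 : ENNReal.ofReal (2 * (3/64 * (p:ℝ) / (n:ℝ)))
      = ENNReal.ofReal (3/64 * (p:ℝ) / (n:ℝ)) + ENNReal.ofReal (3/64 * (p:ℝ) / (n:ℝ)) := by
    rw [← ENNReal.ofReal_add (by positivity) (by positivity)]
    congr 1
    ring
  by_cases hc : ENNReal.ofReal (3/64 * (p:ℝ) / (n:ℝ)) ≤ R 1
  · refine ⟨Matrix.diagonal (fun _ : Fin p => ((1:ℝ≥0):ℝ)), ?_, ?_, ?_, ?_⟩
    · exact Matrix.posSemidef_diagonal_iff.mpr fun i => by norm_num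
    · intro i j hij
      exact Matrix.diagonal_apply_ne _ hij
    · intro i
      rw [Matrix.diagonal_apply_eq]
      norm_num
    · rw [frob_diag p ((1:ℝ≥0):ℝ)]
      exact le_trans (le_of_eq (by norm_num)) hc
  · refine ⟨Matrix.diagonal (fun _ : Fin p => ((v:ℝ≥0):ℝ)), ?_, ?_, ?_, ?_⟩
    · exact Matrix.posSemidef_diagonal_iff.mpr fun i => v.2
    · intro i j hij
      exact Matrix.diagonal_apply_ne _ hij
    · intro i
      rw [Matrix.diagonal_apply_eq]
      exact hv1
    · rw [frob_diag p ((v:ℝ≥0):ℝ)]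
      by_contra hlt
      push_neg at hc hlt
      have : R 1 + R v < ENNReal.ofReal (3/64 * (p:ℝ) / (n:ℝ))
          + ENNReal.ofReal (3/64 * (p:ℝ) / (n:ℝ)) := ENNReal.add_lt_add hc hlt
      rw [← hsum2] at this
      exact absurd hfinal (not_le.mpr this)
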